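/- Suppose 𝒢 satisfies balanced exposure. Then for every γ ≥ 0 and δ ≥ 0, the harmonic state x̄ — the opinion vector with x̄_i = 0 for every persuadable node i and zealot opinions −1 and +1 — is a steady state of the SBCM, i.e., F_γ(x̄) = 0. -/
import Mathlib


open Finset Filter

namespace SBCM

variable {V : Type*} [Fintype V] [DecidableEq V]

/-- Sigmoidal influence weight. -/
noncomputable def wt (G : SimpleGraph V) [DecidableRel G.Adj] (γ δ : ℝ) (x : V → ℝ)
    (i j : V) : ℝ :=
  if G.Adj i j then 1 / (1 + Real.exp (γ * (x i - x j) ^ 2 - γ * δ)) else 0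

/-- SBCM update operator. -/
noncomputable def F (G : SimpleGraph V) [DecidableRel G.Adj] (Z : Finset V) (γ δ : ℝ)
    (x : V → ℝ) (i : V) : ℝ :=
  if i ∈ Z then 0
  else (∑ j, wt G γ δ x i j * (x j - x i)) / (∑ j, wt G γ δ x i j)

/-- Jacobian block over the persuadable nodes. -/
noncomputable def Jp (G : SimpleGraph V) [DecidableRel G.Adj] (Z : Finset V) (γ δ : ℝ)
    (x : V → ℝ) : Matrix {v : V // v ∉ Z} {v : V // v ∉ Z} ℝ :=
  fun i j => fderiv ℝ (fun y : V → ℝ => F G Z γ δ y i.val) x (Pi.single (j : V) (1 : ℝ))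

/-- `μ` is a (real) eigenvalue of the matrix `M`. -/
def HasEig {n : Type*} [Fintype n] (M : Matrix n n ℝ) (μ : ℝ) : Prop :=
  ∃ φ : n → ℝ, φ ≠ 0 ∧ M.mulVec φ = μ • φ

/-- All eigenvalues of `M` are strictly negative. -/
def LinStable {n : Type*} [Fintype n] (M : Matrix n n ℝ) : Prop :=
  ∀ μ : ℝ, HasEig M μ → μ < 0

/-- `M` has a strictly positive eigenvalue. -/
def LinUnstable {n : Type*} [Fintype n] (M : Matrix n n ℝ) : Prop :=
  ∃ μ : ℝ, 0 < μ ∧ HasEig M μ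

end SBCM

namespace SBCM

/-- The harmonic state of a balanced-exposure graph: zealot `z₁` holds opinion `−1`,
zealot `z₂` holds opinion `+1`, and all persuadable nodes hold opinion `0`. -/
noncomputable def xbarBE {V : Type*} [DecidableEq V] (z₁ z₂ : V) : V → ℝ :=
  fun v => if v = z₁ then -1 else if v = z₂ then 1 else 0

end SBCM

/-- On a balanced-exposure graph (two zealots with opinions `−1` and
`+1`, and every persuadable node adjacent to both zealots or to neither), the harmonic
state (all persuadable opinions `0`) is a steady state of the SBCM for all
`γ, δ ≥ 0`. -/
theorem stmt_16 {V : Type*} [Fintype V] [DecidableEq V]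
    (G : SimpleGraph V) [DecidableRel G.Adj] (z₁ z₂ : V) (hzz : z₁ ≠ z₂)
    (hnbr : ∀ i : V, i ∉ ({z₁, z₂} : Finset V) → ∃ j, G.Adj i j)
    (hBE : ∀ i : V, i ∉ ({z₁, z₂} : Finset V) → (G.Adj i z₁ ↔ G.Adj i z₂))
    (γ δ : ℝ) (hγ : 0 ≤ γ) (hδ : 0 ≤ δ) :
    ∀ i, SBCM.F G ({z₁, z₂} : Finset V) γ δ (SBCM.xbarBE z₁ z₂) i = 0 := by
  intro i
  unfold SBCM.F
  by_cases hi : i ∈ ({z₁, z₂} : Finset V)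
  · simp [hi]
  · simp only [hi, if_false]
    have hi1 : i ≠ z₁ := by intro h; exact hi (by simp [h])
    have hi2 : i ≠ z₂ := by intro h; exact hi (by simp [h])
    have hxi : SBCM.xbarBE z₁ z₂ i = 0 := by simp [SBCM.xbarBE, hi1, hi2]
    have hkey : (∑ j, SBCM.wt G γ δ (SBCM.xbarBE z₁ z₂) i j * (SBCM.xbarBE z₁ z₂ j - SBCM.xbarBE z₁ z₂ i)) = 0 := by
      have hzero : ∀ j ∈ Finset.univ, j ∉ ({z₁, z₂} : Finset V) →
          SBCM.wt G γ δ (SBCM.xbarBE z₁ z₂) i j * (SBCM.xbarBE z₁ z₂ j - SBCM.xbarBE z₁ z₂ i) = 0 := by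
        intro j _ hj
        have hj1 : j ≠ z₁ := by intro h; exact hj (by simp [h])
        have hj2 : j ≠ z₂ := by intro h; exact hj (by simp [h])
        simp [SBCM.xbarBE, hj1, hj2, hi1, hi2]
      rw [← Finset.sum_subset (Finset.subset_univ ({z₁, z₂} : Finset V)) hzero,
        Finset.sum_pair hzz]
      have hwt : SBCM.wt G γ δ (SBCM.xbarBE z₁ z₂) i z₁ = SBCM.wt G γ δ (SBCM.xbarBE z₁ z₂) i z₂ := by
        unfold SBCM.wt
        by_cases ha : G.Adj i z₁
        · rw [if_pos ha, if_pos ((hBE i hi).mp ha)]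
          simp [SBCM.xbarBE, hi1, hi2, hzz]
        · rw [if_neg ha, if_neg (fun h => ha ((hBE i hi).mpr h))]
      simp [SBCM.xbarBE, hi1, hi2, hzz, hzz.symm, hwt]
    rw [hkey, zero_div]
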